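/- Let c : ℕ → ℍ and ε > 0 be such that for every x ∈ ℍ with |x| < ε the series f(x) = Σ_{n=0}^∞ P_n(x)·c_n converges. Then f is quaternionic intrinsic on the ball {|x| < ε} (i.e. f(x̄) = conj(f(x)) whenever |x| < ε) if and only if every coefficient c_n is a real number. -/

import Mathlib

open Quaternion

noncomputable section

/-- The coefficients `T^m_j = 2(m-j+1)/((m+1)(m+2))`. -/
def appellT (m j : ℕ) : ℝ :=
  (2 * ((m : ℝ) - (j : ℝ) + 1)) / (((m : ℝ) + 1) * ((m : ℝ) + 2))

/-- The `m`-th quaternionic Appell polynomial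
`Q_m(x) = Σ_{j=0}^m T^m_j x^{m-j} x̄^j`. -/
def appellQ (m : ℕ) (x : ℍ[ℝ]) : ℍ[ℝ] :=
  ∑ j ∈ Finset.range (m + 1), appellT m j • (x ^ (m - j) * (star x) ^ j)

/-- The normalizing constants `c_m = Σ_{j=0}^m (-1)^j T^m_j`. -/
def appellc (m : ℕ) : ℝ := ∑ j ∈ Finset.range (m + 1), (-1 : ℝ) ^ j * appellT m j

/-- The polynomials `P_m = Q_m / c_m`. -/
def appellP (m : ℕ) (x : ℍ[ℝ]) : ℍ[ℝ] := (appellc m)⁻¹ • appellQ m x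

/-! ### Auxiliary lemmas -/

lemma appellT_pos {m j : ℕ} (h : j ≤ m) : 0 < appellT m j := by
  unfold appellT
  apply div_pos
  · have : (j : ℝ) ≤ (m : ℝ) := by exact_mod_cast h
    linarith
  · positivity

lemma sum_appellT_pos (m : ℕ) : 0 < ∑ j ∈ Finset.range (m + 1), appellT m j := by
  apply Finset.sum_pos
  · intro j hj
    exact appellT_pos (Nat.lt_succ_iff.mp (Finset.mem_range.mp hj))
  · exact ⟨0, Finset.mem_range.mpr (Nat.succ_pos m)⟩

lemma alt_sum (m : ℕ) :
    ∑ j ∈ Finset.range (m + 1), (-1 : ℝ) ^ j * ((m : ℝ) + 1 - (j : ℝ)) =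
      if Even m then ((m : ℝ) + 2) / 2 else ((m : ℝ) + 1) / 2 := by
  induction m with
  | zero => norm_num
  | succ m ih =>
    have key : ∀ j ∈ Finset.range (m + 2),
        (-1 : ℝ) ^ j * (((m + 1 : ℕ) : ℝ) + 1 - (j : ℝ)) =
          (-1 : ℝ) ^ j * ((m : ℝ) + 1 - (j : ℝ)) + (-1 : ℝ) ^ j := by
      intro j _
      push_cast
      ring
    rw [Finset.sum_congr rfl key, Finset.sum_add_distrib, Finset.sum_range_succ,
      neg_one_geom_sum, ih]
    have hlast : ((m : ℝ) + 1 - ((m + 1 : ℕ) : ℝ)) = 0 := by push_cast; ring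
    rw [hlast, mul_zero, add_zero]
    rcases Nat.even_or_odd m with he | ho
    · have h1 : Even (m + 2) := by simpa [Nat.even_add_one] using he
      have h2 : ¬ Even (m + 1) := by simp [Nat.even_add_one, he]
      simp only [if_pos he, if_pos h1, if_neg h2]
      push_cast
      ring
    · have he' : ¬ Even m := Nat.not_even_iff_odd.mpr ho
      have h1 : ¬ Even (m + 2) := by simpa [Nat.even_add_one] using he'
      have h2 : Even (m + 1) := by simpa [Nat.even_add_one] using he'
      simp only [if_neg he', if_neg h1, if_pos h2]
      push_cast
      ring

lemma appellc_pos (m : ℕ) : 0 < appellc m := by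
  have hD : (0 : ℝ) < ((m : ℝ) + 1) * ((m : ℝ) + 2) := by positivity
  have : appellc m = (2 / (((m : ℝ) + 1) * ((m : ℝ) + 2))) *
      ∑ j ∈ Finset.range (m + 1), (-1 : ℝ) ^ j * ((m : ℝ) + 1 - (j : ℝ)) := by
    rw [Finset.mul_sum]
    apply Finset.sum_congr rfl
    intro j _
    unfold appellT
    field_simp
    ring
  rw [this, alt_sum]
  have h2 : (0 : ℝ) < 2 / (((m : ℝ) + 1) * ((m : ℝ) + 2)) := by positivity
  rcases Nat.even_or_odd m with he | ho
  · rw [if_pos he]; positivity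
  · rw [if_neg (Nat.not_even_iff_odd.mpr ho)]; positivity

lemma star_appellQ (m : ℕ) (x : ℍ[ℝ]) : star (appellQ m x) = appellQ m (star x) := by
  unfold appellQ
  rw [star_sum]
  apply Finset.sum_congr rfl
  intro j hj
  have hcomm : Commute x (star x) := (star_comm_self' x).symm
  rw [Quaternion.star_smul, star_mul, star_pow, star_pow, star_star]
  congr 1
  exact hcomm.pow_pow j (m - j)

lemma star_appellP (m : ℕ) (x : ℍ[ℝ]) : star (appellP m x) = appellP m (star x) := by
  unfold appellP
  rw [Quaternion.star_smul, star_appellQ]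

lemma appellP_coe (m : ℕ) (t : ℝ) :
    appellP m ((t : ℍ[ℝ])) =
      ((((appellc m)⁻¹ * ∑ j ∈ Finset.range (m + 1), appellT m j) * t ^ m : ℝ) : ℍ[ℝ]) := by
  unfold appellP appellQ
  have hterm : ∀ j ∈ Finset.range (m + 1),
      appellT m j • (((t : ℍ[ℝ])) ^ (m - j) * (star ((t : ℍ[ℝ]))) ^ j) =
        appellT m j • ((t : ℍ[ℝ]) ^ m) := by
    intro j hj
    have hj' : j ≤ m := Nat.lt_succ_iff.mp (Finset.mem_range.mp hj)
    rw [star_coe, ← pow_add, Nat.sub_add_cancel hj']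
  rw [Finset.sum_congr rfl hterm, ← Finset.sum_smul, smul_smul, ← Quaternion.coe_pow,
    Quaternion.smul_coe]

/-- Uniqueness of power series coefficients: if `∑ tⁿ • aₙ` sums to `0` for all small real
`t`, then all `aₙ` vanish. -/
lemma coeffs_eq_zero {E : Type*} [NormedAddCommGroup E] [NormedSpace ℝ E]
    (a : ℕ → E) {ε : ℝ} (hε : 0 < ε)
    (h : ∀ t : ℝ, |t| < ε → HasSum (fun n => t ^ n • a n) 0) : ∀ n, a n = 0 := by
  set p : FormalMultilinearSeries ℝ ℝ E :=
    fun n => ContinuousMultilinearMap.mkPiRing ℝ (Fin n) (a n) with hp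
  have hcoeff : ∀ n, p.coeff n = a n := by
    intro n
    simp [FormalMultilinearSeries.coeff, hp, ContinuousMultilinearMap.mkPiRing_apply]
  have hps : HasFPowerSeriesAt (0 : ℝ → E) p 0 := by
    rw [hasFPowerSeriesAt_iff]
    filter_upwards [Metric.ball_mem_nhds (0 : ℝ) hε] with t ht
    simp only [Metric.mem_ball, dist_zero_right, Real.norm_eq_abs] at ht
    simpa [hcoeff] using h t ht
  intro n
  have h0 := hps.eq_zero
  have := hcoeff n
  rw [h0] at this
  simpa [FormalMultilinearSeries.coeff] using this.symm

/-- A convergent series `f(x) = Σ_n P_n(x) c_n` on a ball around the origin is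
quaternionic intrinsic (`f(x̄) = conj(f(x))`) if and only if all its coefficients
are real. -/
theorem appellP_series_intrinsic_iff_real_coeffs (c : ℕ → ℍ[ℝ]) (ε : ℝ) (hε : 0 < ε)
    (hconv : ∀ x : ℍ[ℝ], ‖x‖ < ε → Summable fun n => appellP n x * c n) :
    (∀ x : ℍ[ℝ], ‖x‖ < ε →
        (∑' n, appellP n (star x) * c n) = star (∑' n, appellP n x * c n)) ↔
    (∀ n, (c n).imI = 0 ∧ (c n).imJ = 0 ∧ (c n).imK = 0) := by
  constructor
  · intro h
    -- Plug in real points and use uniqueness of power series coefficients.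
    set β : ℕ → ℝ := fun m => (appellc m)⁻¹ * ∑ j ∈ Finset.range (m + 1), appellT m j with hβ
    have hβpos : ∀ m, 0 < β m := fun m =>
      mul_pos (inv_pos.mpr (appellc_pos m)) (sum_appellT_pos m)
    set a : ℕ → ℍ[ℝ] := fun m => β m • (c m - star (c m)) with ha
    have key : ∀ t : ℝ, |t| < ε → HasSum (fun m => t ^ m • a m) 0 := by
      intro t ht
      set x : ℍ[ℝ] := ((t : ℝ) : ℍ[ℝ]) with hx
      have hxε : ‖x‖ < ε := by rwa [hx, Quaternion.norm_coe, Real.norm_eq_abs]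
      have hs := hconv x hxε
      have h1 : HasSum (fun m => appellP m x * c m) (∑' m, appellP m x * c m) := hs.hasSum
      have h2 : HasSum (fun m => star (appellP m x * c m))
          (star (∑' m, appellP m x * c m)) := h1.star
      have heq := h x hxε
      rw [hx, Quaternion.star_coe] at heq
      rw [← heq] at h2
      have h3 := h1.sub h2
      rw [sub_self] at h3
      convert h3 using 1
      · rfl
      funext m
      have hPm : appellP m x = ((β m * t ^ m : ℝ) : ℍ[ℝ]) := by
        rw [hx, appellP_coe, hβ]
      rw [hPm, star_mul, Quaternion.star_coe, Quaternion.coe_commutes, ← sub_mul,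
        Quaternion.mul_coe_eq_smul]
      simp only [ha]
      rw [smul_smul, mul_comm]
    have hzero := coeffs_eq_zero a hε key
    intro n
    have h0 := hzero n
    rw [ha] at h0
    have hcs : c n - star (c n) = 0 := by
      have := smul_eq_zero.mp h0
      rcases this with h' | h'
      · exact absurd h' (ne_of_gt (hβpos n))
      · exact h'
    have hstar : star (c n) = c n := by
      have := sub_eq_zero.mp hcs
      exact this.symm
    refine ⟨?_, ?_, ?_⟩
    · have := congrArg QuaternionAlgebra.imI hstar
      simp only [Quaternion.imI_star] at this
      linarith
    · have := congrArg QuaternionAlgebra.imJ hstar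
      simp only [Quaternion.imJ_star] at this
      linarith
    · have := congrArg QuaternionAlgebra.imK hstar
      simp only [Quaternion.imK_star] at this
      linarith
  · intro h x hx
    have creal : ∀ n, c n = (((c n).re : ℝ) : ℍ[ℝ]) := by
      intro n
      obtain ⟨h1, h2, h3⟩ := h n
      ext <;> simp [h1, h2, h3]
    rw [tsum_star]
    apply tsum_congr
    intro n
    rw [creal n, star_mul, Quaternion.star_coe, star_appellP, Quaternion.coe_commutes]
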